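/- Fix $c > 1$. With $r(u,v) = \sqrt{(v-u)^2+4cuv}$, $h(u,v) = (2cu + (v-u) - r(u,v))/u$, and $\ln G(u,v) = \ln(4c(c-1)^2) - u \ln h(u,v) - v \ln h(v,u) - (1-u)\ln h(1-u,1-v) - (1-v)\ln h(1-v,1-u)$, the function $u \mapsto \ln G(u,v)$ is strictly concave on $(0,1)$ for each fixed $v \in (0,1)$; indeed $\frac{\partial^2}{\partial u^2} \ln G(u,v) = -\frac{v}{u\, r(u,v)} - \frac{1-v}{(1-u)\, r(1-u,1-v)} < 0$. -/

import Mathlib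

noncomputable def rLD (c u v : ℝ) : ℝ := Real.sqrt ((v - u) ^ 2 + 4 * c * u * v)

noncomputable def hLD (c u v : ℝ) : ℝ := (2 * c * u + (v - u) - rLD c u v) / u

section aux
variable {c u v : ℝ}

lemma P_pos (hc : 1 < c) (hu : 0 < u) (hv : 0 < v) : 0 < (v - u) ^ 2 + 4 * c * u * v := by
  nlinarith [sq_nonneg (v - u), mul_pos hu hv, mul_pos (sub_pos.mpr hc) (mul_pos hu hv)]

lemma rLD_pos (hc : 1 < c) (hu : 0 < u) (hv : 0 < v) : 0 < rLD c u v :=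
  Real.sqrt_pos.mpr (P_pos hc hu hv)

lemma rLD_sq (hc : 1 < c) (hu : 0 < u) (hv : 0 < v) :
    rLD c u v ^ 2 = (v - u) ^ 2 + 4 * c * u * v :=
  Real.sq_sqrt (P_pos hc hu hv).le

lemma A_pos (hc : 1 < c) (hu : 0 < u) (hv : 0 < v) :
    0 < 2 * c * u + (v - u) - rLD c u v := by
  have h1 : rLD c u v < 2 * c * u + (v - u) := by
    rw [rLD, Real.sqrt_lt' (by nlinarith)]
    nlinarith [mul_pos (mul_pos (show (0:ℝ) < c by linarith) (sub_pos.mpr hc)) (mul_pos hu hu)]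
  linarith

lemma hLD_pos (hc : 1 < c) (hu : 0 < u) (hv : 0 < v) : 0 < hLD c u v :=
  div_pos (A_pos hc hu hv) hu

lemma hasDerivAt_rLD (hc : 1 < c) (hu : 0 < u) (hv : 0 < v) :
    HasDerivAt (fun u' => rLD c u' v) ((u - v + 2 * c * v) / rLD c u v) u := by
  have hq : HasDerivAt (fun u' : ℝ => (v - u') ^ 2 + 4 * c * u' * v)
      (2 * (u - v) + 4 * c * v) u := by
    have h1 : HasDerivAt (fun u' : ℝ => (v - u') ^ 2) (2 * (v - u) ^ 1 * (0 - 1)) u :=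
      ((hasDerivAt_const u v).sub (hasDerivAt_id u)).pow 2
    have h2 : HasDerivAt (fun u' : ℝ => 4 * c * u' * v) (4 * c * v) u := by
      simpa using ((hasDerivAt_id u).const_mul (4 * c)).mul_const v
    exact (h1.fun_add h2).congr_deriv (by ring)
  have := hq.sqrt (P_pos hc hu hv).ne'
  refine this.congr_deriv ?_
  simp only [rLD]
  rw [div_eq_div_iff (by exact (mul_pos two_pos (rLD_pos hc hu hv)).ne')
    (by exact (rLD_pos hc hu hv).ne')]
  ring

end aux

section aux2
variable {c u v : ℝ}
lemma hasDerivAt_log_hLD (hc : 1 < c) (hu : 0 < u) (hv : 0 < v) :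
    HasDerivAt (fun u' => Real.log (hLD c u' v)) (v / (u * rLD c u v)) u := by
  have hr := hasDerivAt_rLD hc hu hv
  have hA : HasDerivAt (fun u' => 2 * c * u' + (v - u') - rLD c u' v)
      (2 * c - 1 - (u - v + 2 * c * v) / rLD c u v) u := by
    have h1 : HasDerivAt (fun u' : ℝ => 2 * c * u' + (v - u')) (2 * c - 1) u := by
      have := ((hasDerivAt_id u).const_mul (2 * c)).fun_add
        ((hasDerivAt_const u v).fun_sub (hasDerivAt_id' (x := u)))
      exact this.congr_deriv (by ring)
    exact h1.fun_sub hr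
  have hh : HasDerivAt (fun u' => hLD c u' v)
      (((2 * c - 1 - (u - v + 2 * c * v) / rLD c u v) * u
        - (2 * c * u + (v - u) - rLD c u v) * 1) / u ^ 2) u := hA.div (hasDerivAt_id u) hu.ne'
  have := hh.log (hLD_pos hc hu hv).ne'
  refine this.congr_deriv ?_
  have hR := rLD_pos hc hu hv
  have hA0 := A_pos hc hu hv
  have hsq := rLD_sq hc hu hv
  rw [hLD]
  field_simp
  linear_combination hsq
end aux2

section aux3
variable {c u v : ℝ}

lemma rLD_symm (c u v : ℝ) : rLD c v u = rLD c u v := by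
  rw [rLD, rLD]; ring_nf

lemma hasDerivAt_log_hLD' (hc : 1 < c) (hu : 0 < u) (hv : 0 < v) :
    HasDerivAt (fun u' => Real.log (hLD c v u')) (-(1 / rLD c u v)) u := by
  have hr' : HasDerivAt (fun u' => rLD c v u') ((u - v + 2 * c * v) / rLD c u v) u := by
    have hfun : (fun u' => rLD c v u') = fun u' => rLD c u' v := by
      funext u'; exact rLD_symm c u' v
    rw [hfun]; exact hasDerivAt_rLD hc hu hv
  have hB : HasDerivAt (fun u' => 2 * c * v + (u' - v) - rLD c v u')
      (1 - (u - v + 2 * c * v) / rLD c u v) u := by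
    have h1 : HasDerivAt (fun u' : ℝ => 2 * c * v + (u' - v)) (1 : ℝ) u := by
      exact ((hasDerivAt_const u (2 * c * v)).fun_add
        ((hasDerivAt_id' (x := u)).fun_sub (hasDerivAt_const u v))).congr_deriv (by ring)
    exact h1.fun_sub hr'
  have hh : HasDerivAt (fun u' => hLD c v u')
      ((1 - (u - v + 2 * c * v) / rLD c u v) / v) u := by
    have hfun : (fun u' => hLD c v u') = fun u' => (2 * c * v + (u' - v) - rLD c v u') / v := by
      funext u'; rw [hLD]
    rw [hfun]; exact hB.div_const v
  have := hh.log (hLD_pos hc hv hu).ne'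
  refine this.congr_deriv ?_
  have hR := rLD_pos hc hu hv
  have hB0 : 0 < 2 * c * v + (u - v) - rLD c u v := by
    have := A_pos hc hv hu; rwa [rLD_symm] at this
  rw [hLD, show rLD c v u = rLD c u v from rLD_symm c u v]
  have hB0' := hB0.ne'
  field_simp
  have hB1 : -rLD c u v + u - v + v * c * 2 ≠ 0 :=
    (by linarith : (0:ℝ) < -rLD c u v + u - v + v * c * 2).ne'
  have key : (rLD c u v - u - v * c * 2 + v) * (-rLD c u v + u - v + v * c * 2)⁻¹ = -1 := by
    rw [show rLD c u v - u - v * c * 2 + v = -(-rLD c u v + u - v + v * c * 2) by ring,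
      neg_mul, mul_inv_cancel₀ hB1]
  linear_combination key

lemma hasDerivAt_phi (hc : 1 < c) (hu : 0 < u) (hv : 0 < v) :
    HasDerivAt (fun u' => u' * Real.log (hLD c u' v) + v * Real.log (hLD c v u'))
      (Real.log (hLD c u v)) u := by
  have h1 := (hasDerivAt_id u).fun_mul (hasDerivAt_log_hLD hc hu hv)
  have h2 := (hasDerivAt_log_hLD' hc hu hv).const_mul v
  have := h1.fun_add h2
  refine this.congr_deriv ?_
  have hR := (rLD_pos hc hu hv).ne'
  simp only [id_eq]
  field_simp
  ring
end aux3

noncomputable def lnG (c u v : ℝ) : ℝ :=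
  Real.log (4 * c * (c - 1) ^ 2) - u * Real.log (hLD c u v) - v * Real.log (hLD c v u)
    - (1 - u) * Real.log (hLD c (1 - u) (1 - v)) - (1 - v) * Real.log (hLD c (1 - v) (1 - u))

section aux4
variable {c u v : ℝ}

lemma hasDerivAt_oneSub (u : ℝ) : HasDerivAt (fun u' : ℝ => 1 - u') (-1) u := by
  exact ((hasDerivAt_const u (1:ℝ)).fun_sub (hasDerivAt_id' (x := u))).congr_deriv (by ring)

lemma hasDerivAt_lnG (hc : 1 < c) (hu : u ∈ Set.Ioo (0:ℝ) 1) (hv : v ∈ Set.Ioo (0:ℝ) 1) :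
    HasDerivAt (fun u' => lnG c u' v)
      (Real.log (hLD c (1 - u) (1 - v)) - Real.log (hLD c u v)) u := by
  obtain ⟨hu0, hu1⟩ := hu; obtain ⟨hv0, hv1⟩ := hv
  have h1 := hasDerivAt_phi (c := c) (u := u) (v := v) hc hu0 hv0
  have h2 := (hasDerivAt_phi (c := c) (u := 1 - u) (v := 1 - v) hc (by linarith)
    (by linarith)).comp u (hasDerivAt_oneSub u)
  have h3 := ((hasDerivAt_const u (Real.log (4 * c * (c - 1) ^ 2))).fun_sub h1).fun_sub h2
  have hfun : (fun u' => lnG c u' v) = fun u' =>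
      Real.log (4 * c * (c - 1) ^ 2)
        - (u' * Real.log (hLD c u' v) + v * Real.log (hLD c v u'))
        - ((fun w => w * Real.log (hLD c w (1 - v)) + (1 - v) * Real.log (hLD c (1 - v) w))
            ∘ fun u' => 1 - u') u' := by
    funext u'
    simp only [lnG, Function.comp_apply]
    ring
  rw [hfun]
  refine h3.congr_deriv ?_
  ring

lemma hasDerivAt_g1 (hc : 1 < c) (hu : u ∈ Set.Ioo (0:ℝ) 1) (hv : v ∈ Set.Ioo (0:ℝ) 1) :
    HasDerivAt (fun u' => Real.log (hLD c (1 - u') (1 - v)) - Real.log (hLD c u' v))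
      (-(v / (u * rLD c u v)) - (1 - v) / ((1 - u) * rLD c (1 - u) (1 - v))) u := by
  obtain ⟨hu0, hu1⟩ := hu; obtain ⟨hv0, hv1⟩ := hv
  have hd1 := hasDerivAt_log_hLD (c := c) (u := u) (v := v) hc hu0 hv0
  have hd2 := (hasDerivAt_log_hLD (c := c) (u := 1 - u) (v := 1 - v) hc (by linarith)
    (by linarith)).comp u (hasDerivAt_oneSub u)
  have := hd2.fun_sub hd1
  refine this.congr_deriv ?_
  ring
end aux4

theorem lnG_strictly_concave (c v : ℝ) (hc : 1 < c) (hv : v ∈ Set.Ioo (0:ℝ) 1) :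
    StrictConcaveOn ℝ (Set.Ioo (0:ℝ) 1) (fun u => lnG c u v) ∧
    ∀ u ∈ Set.Ioo (0:ℝ) 1,
      deriv (deriv (fun u' => lnG c u' v)) u
          = -(v / (u * rLD c u v)) - (1 - v) / ((1 - u) * rLD c (1 - u) (1 - v)) ∧
      deriv (deriv (fun u' => lnG c u' v)) u < 0 := by
  have key : ∀ u ∈ Set.Ioo (0:ℝ) 1,
      deriv (deriv (fun u' => lnG c u' v)) u
        = -(v / (u * rLD c u v)) - (1 - v) / ((1 - u) * rLD c (1 - u) (1 - v)) := by
    intro u hu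
    have hev : deriv (fun u' => lnG c u' v) =ᶠ[nhds u]
        fun u' => Real.log (hLD c (1 - u') (1 - v)) - Real.log (hLD c u' v) := by
      filter_upwards [isOpen_Ioo.mem_nhds hu] with x hx
      exact (hasDerivAt_lnG hc hx hv).deriv
    rw [hev.deriv_eq]
    exact (hasDerivAt_g1 hc hu hv).deriv
  have neg : ∀ u ∈ Set.Ioo (0:ℝ) 1,
      -(v / (u * rLD c u v)) - (1 - v) / ((1 - u) * rLD c (1 - u) (1 - v)) < 0 := by
    intro u hu
    have h1 : 0 < v / (u * rLD c u v) :=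
      div_pos hv.1 (mul_pos hu.1 (rLD_pos hc hu.1 hv.1))
    have h2 : 0 < (1 - v) / ((1 - u) * rLD c (1 - u) (1 - v)) :=
      div_pos (by linarith [hv.2]) (mul_pos (by linarith [hu.2])
        (rLD_pos hc (by linarith [hu.2]) (by linarith [hv.2])))
    linarith
  refine ⟨?_, fun u hu => ⟨key u hu, by rw [key u hu]; exact neg u hu⟩⟩
  apply strictConcaveOn_of_deriv2_neg (convex_Ioo 0 1)
  · intro x hx
    exact (hasDerivAt_lnG hc hx hv).continuousAt.continuousWithinAt
  · intro x hx
    rw [interior_Ioo] at hx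
    show deriv (deriv fun u' => lnG c u' v) x < 0
    rw [key x hx]
    exact neg x hx
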